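/- Let n, α, t be complex numbers with t ≠ 0, and set a₀ = n+α, a₁ = −n, a₂ = n, a₃ = 1−n−α. Let q, p be complex numbers with p ≠ 0, p+t ≠ 0 and qp+n ≠ 0, and define x = (q(p+t)+n)/(qp+n), y = (p+t)(qp+n)/t. Define q̄ = 1 − q − a₂/p − a₀/(p+t), assume q̄ ≠ 0 and q̄ ≠ 1, define p̄ = −p − t + (a₁−1)/q̄ + (a₃−1)/(q̄−1), assume q̄p̄ + (n+1) ≠ 0, and define x̄ = (q̄(p̄+t)+(n+1))/(q̄p̄+(n+1)), ȳ = (p̄+t)(q̄p̄+(n+1))/t. Then y ≠ 0, x̄ ≠ 1, and the pair satisfies the Laguerre-weight recurrence: x·x̄ = (y−n)(y−(n+α))/y² and y + ȳ = −((−t+2n+1+α)·x̄ − (2n+1+α))/(x̄−1)². -/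

import Mathlib

set_option maxHeartbeats 4000000 in
/-- The change of variables of Theorem 1 (Hu–Dzhamay–Chen) conjugates one step of
the standard discrete Painlevé equation on the `D₅⁽¹⁾` surface (KNY form), with root variables
`a₀ = n+α`, `a₁ = −n`, `a₂ = n`, `a₃ = 1−n−α`, to one step of the Laguerre-weight recurrence of
Lyu–Chen. -/
theorem laguerre_recurrence_from_dPainleve
    (n α t q p x y qb pb xb yb a0 a1 a2 a3 : ℂ)
    (ht : t ≠ 0)
    (ha0 : a0 = n + α) (ha1 : a1 = -n) (ha2 : a2 = n) (ha3 : a3 = 1 - n - α)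
    (hp : p ≠ 0) (hpt : p + t ≠ 0) (hqp : q * p + n ≠ 0)
    (hx : x = (q * (p + t) + n) / (q * p + n))
    (hy : y = (p + t) * (q * p + n) / t)
    (hqb : qb = 1 - q - a2 / p - a0 / (p + t))
    (hqb0 : qb ≠ 0) (hqb1 : qb ≠ 1)
    (hpb : pb = -p - t + (a1 - 1) / qb + (a3 - 1) / (qb - 1))
    (hqpb : qb * pb + (n + 1) ≠ 0)
    (hxb : xb = (qb * (pb + t) + (n + 1)) / (qb * pb + (n + 1)))
    (hyb : yb = (pb + t) * (qb * pb + (n + 1)) / t) :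
    y ≠ 0 ∧ xb ≠ 1 ∧
      x * xb = (y - n) * (y - (n + α)) / y ^ 2 ∧
      y + yb = -((-t + 2 * n + 1 + α) * xb - (2 * n + 1 + α)) / (xb - 1) ^ 2 := by
  rw [ha2, ha0] at hqb
  rw [ha1, ha3] at hpb
  have hqb1' : qb - 1 ≠ 0 := sub_ne_zero.mpr hqb1
  have hPq : (p * (p + t)) ≠ 0 := mul_ne_zero hp hpt
  have hqbv : qb = ((1 - q) * p * (p + t) - n * (p + t) - (n + α) * p) / (p * (p + t)) := by
    rw [hqb]; field_simp
  have hB : ((1 - q) * p * (p + t) - n * (p + t) - (n + α) * p) ≠ 0 := by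
    intro h; exact hqb0 (by rw [hqbv, h, zero_div])
  have hqb1v : qb - 1 = (((1 - q) * p * (p + t) - n * (p + t) - (n + α) * p) - (p * (p + t))) / (p * (p + t)) := by
    rw [hqbv]; field_simp
  have hB1 : (((1 - q) * p * (p + t) - n * (p + t) - (n + α) * p) - (p * (p + t))) ≠ 0 := by
    intro h; exact hqb1' (by rw [hqb1v, h, zero_div])
  have hpbv : pb = ((-p - t) * (((1 - q) * p * (p + t) - n * (p + t) - (n + α) * p) * (((1 - q) * p * (p + t) - n * (p + t) - (n + α) * p) - (p * (p + t)))) + (-n - 1) * (p * (p + t)) * (((1 - q) * p * (p + t) - n * (p + t) - (n + α) * p) - (p * (p + t))) + (-n - α) * (p * (p + t)) * ((1 - q) * p * (p + t) - n * (p + t) - (n + α) * p)) / (((1 - q) * p * (p + t) - n * (p + t) - (n + α) * p) * (((1 - q) * p * (p + t) - n * (p + t) - (n + α) * p) - (p * (p + t)))) := by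
    rw [hpb, hqb1v, hqbv]
    generalize ((1 - q) * p * (p + t) - n * (p + t) - (n + α) * p) = bb at hB hB1 ⊢
    field_simp [ht, hp, hpt, hqp, hPq, hB, hB1]
    ring
  have hDv : qb * pb + (n + 1) = (((-p - t) * (((1 - q) * p * (p + t) - n * (p + t) - (n + α) * p) * (((1 - q) * p * (p + t) - n * (p + t) - (n + α) * p) - (p * (p + t)))) + (-n - 1) * (p * (p + t)) * (((1 - q) * p * (p + t) - n * (p + t) - (n + α) * p) - (p * (p + t))) + (-n - α) * (p * (p + t)) * ((1 - q) * p * (p + t) - n * (p + t) - (n + α) * p)) + (n + 1) * (p * (p + t)) * (((1 - q) * p * (p + t) - n * (p + t) - (n + α) * p) - (p * (p + t)))) / ((p * (p + t)) * (((1 - q) * p * (p + t) - n * (p + t) - (n + α) * p) - (p * (p + t)))) := by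
    rw [hqbv, hpbv]
    generalize ((1 - q) * p * (p + t) - n * (p + t) - (n + α) * p) = bb at hB hB1 ⊢
    field_simp [ht, hp, hpt, hqp, hPq, hB, hB1]
  have hC : (((-p - t) * (((1 - q) * p * (p + t) - n * (p + t) - (n + α) * p) * (((1 - q) * p * (p + t) - n * (p + t) - (n + α) * p) - (p * (p + t)))) + (-n - 1) * (p * (p + t)) * (((1 - q) * p * (p + t) - n * (p + t) - (n + α) * p) - (p * (p + t))) + (-n - α) * (p * (p + t)) * ((1 - q) * p * (p + t) - n * (p + t) - (n + α) * p)) + (n + 1) * (p * (p + t)) * (((1 - q) * p * (p + t) - n * (p + t) - (n + α) * p) - (p * (p + t)))) ≠ 0 := by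
    intro h; exact hqpb (by rw [hDv, h, zero_div])
  have hxbv : xb = ((((-p - t) * (((1 - q) * p * (p + t) - n * (p + t) - (n + α) * p) * (((1 - q) * p * (p + t) - n * (p + t) - (n + α) * p) - (p * (p + t)))) + (-n - 1) * (p * (p + t)) * (((1 - q) * p * (p + t) - n * (p + t) - (n + α) * p) - (p * (p + t))) + (-n - α) * (p * (p + t)) * ((1 - q) * p * (p + t) - n * (p + t) - (n + α) * p)) + (n + 1) * (p * (p + t)) * (((1 - q) * p * (p + t) - n * (p + t) - (n + α) * p) - (p * (p + t)))) + t * (((1 - q) * p * (p + t) - n * (p + t) - (n + α) * p) * (((1 - q) * p * (p + t) - n * (p + t) - (n + α) * p) - (p * (p + t))))) / (((-p - t) * (((1 - q) * p * (p + t) - n * (p + t) - (n + α) * p) * (((1 - q) * p * (p + t) - n * (p + t) - (n + α) * p) - (p * (p + t)))) + (-n - 1) * (p * (p + t)) * (((1 - q) * p * (p + t) - n * (p + t) - (n + α) * p) - (p * (p + t))) + (-n - α) * (p * (p + t)) * ((1 - q) * p * (p + t) - n * (p + t) - (n + α) * p)) + (n + 1) * (p * (p + t)) * (((1 - q) * p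 * (p + t) - n * (p + t) - (n + α) * p) - (p * (p + t)))) := by
    rw [hxb, show qb * (pb + t) + (n + 1) = (qb * pb + (n + 1)) + qb * t by ring, hDv, hqbv]
    generalize ((1 - q) * p * (p + t) - n * (p + t) - (n + α) * p) = bb at hB hB1 hC ⊢
    field_simp [ht, hp, hpt, hqp, hPq, hB, hB1, hC]
  have hxb1v : xb - 1 = t * (((1 - q) * p * (p + t) - n * (p + t) - (n + α) * p) * (((1 - q) * p * (p + t) - n * (p + t) - (n + α) * p) - (p * (p + t)))) / (((-p - t) * (((1 - q) * p * (p + t) - n * (p + t) - (n + α) * p) * (((1 - q) * p * (p + t) - n * (p + t) - (n + α) * p) - (p * (p + t)))) + (-n - 1) * (p * (p + t)) * (((1 - q) * p * (p + t) - n * (p + t) - (n + α) * p) - (p * (p + t))) + (-n - α) * (p * (p + t)) * ((1 - q) * p * (p + t) - n * (p + t) - (n + α) * p)) + (n + 1) * (p * (p + t)) * (((1 - q) * p * (p + t) - n * (p + t) - (n + α) * p) - (p * (p + t)))) := by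
    rw [hxbv, div_sub_one hC]; congr 1; ring
  have hybv : yb = ((((-p - t) * (((1 - q) * p * (p + t) - n * (p + t) - (n + α) * p) * (((1 - q) * p * (p + t) - n * (p + t) - (n + α) * p) - (p * (p + t)))) + (-n - 1) * (p * (p + t)) * (((1 - q) * p * (p + t) - n * (p + t) - (n + α) * p) - (p * (p + t))) + (-n - α) * (p * (p + t)) * ((1 - q) * p * (p + t) - n * (p + t) - (n + α) * p)) + t * (((1 - q) * p * (p + t) - n * (p + t) - (n + α) * p) * (((1 - q) * p * (p + t) - n * (p + t) - (n + α) * p) - (p * (p + t))))) * (((-p - t) * (((1 - q) * p * (p + t) - n * (p + t) - (n + α) * p) * (((1 - q) * p * (p + t) - n * (p + t) - (n + α) * p) - (p * (p + t)))) + (-n - 1) * (p * (p + t)) * (((1 - q) * p * (p + t) - n * (p + t) - (n + α) * p) - (p * (p + t))) + (-n - α) * (p * (p + t)) * ((1 - q) * p * (p + t) - n * (p + t) - (n + α) * p)) + (n + 1) * (p * (p + t)) * (((1 - q) * p * (p + t) - n * (p + t) - (n + α) * p) - (p * (p + t))))) / (t * (p * (p + t)) * ((1 - q) * p * (p + t)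 - n * (p + t) - (n + α) * p) * (((1 - q) * p * (p + t) - n * (p + t) - (n + α) * p) - (p * (p + t))) ^ 2) := by
    rw [hyb, hDv, hpbv]
    generalize ((1 - q) * p * (p + t) - n * (p + t) - (n + α) * p) = bb at hB hB1 hC ⊢
    field_simp [ht, hp, hpt, hqp, hPq, hB, hB1, hC]
  have hy0 : y ≠ 0 := by rw [hy]; exact div_ne_zero (mul_ne_zero hpt hqp) ht
  refine ⟨hy0, ?_, ?_, ?_⟩
  · intro h
    rw [hxbv, div_eq_one_iff_eq hC] at h
    exact mul_ne_zero ht (mul_ne_zero hB hB1) (by linear_combination h)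
  · rw [hx, hxbv, div_mul_div_comm, div_eq_div_iff (mul_ne_zero hqp hC) (pow_ne_zero 2 hy0), hy]
    field_simp [ht, hp, hpt, hqp, hPq, hB, hB1, hC]
    ring
  · set bb := ((1 - q) * p * (p + t) - n * (p + t) - (n + α) * p) with hbb
    clear_value bb
    rw [hy, hybv, hxb1v, hxbv,
      show (p + t) * (q * p + n) = (p + t) * p - (n + α) * p - bb by rw [hbb]; ring]
    set_option maxRecDepth 100000 in
    field_simp [ht, hp, hpt, hB, hB1, hC, show (bb - p * (p + t)) * (bb * (-p - t) + p * (p + t) * (-n - 1)) + p * (p + t) * bb * (-n - α) + p * (p + t) * (bb - p * (p + t)) * (n + 1) ≠ 0 by convert hC using 1; ring]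
    ring
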